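/- Let D = (d_1, ..., d_n) be a nonincreasing sequence of positive integers with even sum. If the Berge inequalities sum_{i=1}^k d_i ≤ sum_{i=1}^k bar{d}_i hold for k = m and for every right strong index k (i.e., strong indices k with d_k > d_{k+1}), then D is graphic. -/

import Mathlib

/-- A finite sequence of natural numbers is graphic if it is, up to permutation,
the degree sequence of a simple graph on `l.length` vertices. -/
def IsGraphic (l : List ℕ) : Prop :=
  ∃ G : SimpleGraph (Fin l.length),
    List.Perm (List.ofFn fun v => Nat.card (G.neighborSet v)) l

/-- Corrected conjugate:
`bar d_i = |{j ∈ [1..n] : j < i, d j ≥ i - 1}| + |{j ∈ [1..n] : j > i, d j ≥ i}|`. -/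
def corrConj (n : ℕ) (d : ℕ → ℕ) (i : ℕ) : ℕ :=
  ((Finset.Icc 1 n).filter (fun j => j < i ∧ i - 1 ≤ d j)).card +
    ((Finset.Icc 1 n).filter (fun j => i < j ∧ i ≤ d j)).card

open Finset

namespace EG17


variable {n : ℕ}

/-- Add edge a-b. -/
def addE (G : SimpleGraph (Fin n)) (a b : Fin n) : SimpleGraph (Fin n) where
  Adj x y := G.Adj x y ∨ (x ≠ y ∧ ((x = a ∧ y = b) ∨ (x = b ∧ y = a)))
  symm := by
    constructor
    intro x y h
    rcases h with h | ⟨hxy, h⟩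
    · exact Or.inl h.symm
    · exact Or.inr ⟨hxy.symm, by tauto⟩
  loopless := by
    constructor
    intro x h
    rcases h with h | ⟨hxx, _⟩
    · exact G.loopless.irrefl x h
    · exact hxx rfl

lemma addE_nset (G : SimpleGraph (Fin n)) {a b : Fin n} (hab : a ≠ b) (v : Fin n) :
    (addE G a b).neighborSet v =
      if v = a then insert b (G.neighborSet a)
      else if v = b then insert a (G.neighborSet b)
      else G.neighborSet v := by
  split_ifs with h1 h2 <;>
    (ext w; simp only [SimpleGraph.mem_neighborSet, addE, Set.mem_insert_iff]; constructor)
  · subst h1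
    rintro (h | ⟨hne, ⟨e1, e2⟩ | ⟨e1, e2⟩⟩)
    · tauto
    · exact Or.inl e2
    · exact (hab e1).elim
  · subst h1
    rintro (rfl | h)
    · tauto
    · exact Or.inl h
  · subst h2
    rintro (h | ⟨hne, ⟨e1, e2⟩ | ⟨e1, e2⟩⟩)
    · tauto
    · exact (hab e1.symm).elim
    · exact Or.inl e2
  · subst h2
    rintro (rfl | h)
    · tauto
    · exact Or.inl h
  · rintro (h | ⟨hne, ⟨e1, e2⟩ | ⟨e1, e2⟩⟩)
    · exact h
    · exact absurd e1 h1
    · exact absurd e1 h2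
  · intro h; exact Or.inl h

/-- 2-switch plus keep: remove x-y, add a-x and b-y. -/
def swapE (G : SimpleGraph (Fin n)) (a b x y : Fin n) : SimpleGraph (Fin n) where
  Adj u v := (G.Adj u v ∧ ¬((u = x ∧ v = y) ∨ (u = y ∧ v = x))) ∨
    (u ≠ v ∧ ((u = a ∧ v = x) ∨ (u = x ∧ v = a) ∨ (u = b ∧ v = y) ∨ (u = y ∧ v = b)))
  symm := by
    constructor
    intro u v h
    rcases h with ⟨h, h2⟩ | ⟨huv, h⟩
    · exact Or.inl ⟨h.symm, by tauto⟩
    · exact Or.inr ⟨huv.symm, by tauto⟩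
  loopless := by
    constructor
    intro u h
    rcases h with ⟨h, _⟩ | ⟨huu, _⟩
    · exact G.loopless.irrefl u h
    · exact huu rfl

variable {G : SimpleGraph (Fin n)} {a b x y v : Fin n}

lemma swapE_nset_a (hax : a ≠ x) (hay : a ≠ y) (hab : a ≠ b) :
    (swapE G a b x y).neighborSet a = insert x (G.neighborSet a) := by
  ext w
  simp only [SimpleGraph.mem_neighborSet, swapE, Set.mem_insert_iff]
  constructor
  · rintro (⟨h, h2⟩ | ⟨hne, ⟨e1, e2⟩ | ⟨e1, e2⟩ | ⟨e1, e2⟩ | ⟨e1, e2⟩⟩)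
    · exact Or.inr h
    · exact Or.inl e2
    · exact absurd e1 hax
    · exact (hab e1).elim
    · exact absurd e1 hay
  · rintro (rfl | h)
    · tauto
    · refine Or.inl ⟨h, ?_⟩
      rintro (⟨e1, e2⟩ | ⟨e1, e2⟩)
      · exact hax e1
      · exact hay e1

lemma swapE_nset_b (hbx : b ≠ x) (hby : b ≠ y) (hab : a ≠ b) :
    (swapE G a b x y).neighborSet b = insert y (G.neighborSet b) := by
  ext w
  simp only [SimpleGraph.mem_neighborSet, swapE, Set.mem_insert_iff]
  constructor
  · rintro (⟨h, h2⟩ | ⟨hne, ⟨e1, e2⟩ | ⟨e1, e2⟩ | ⟨e1, e2⟩ | ⟨e1, e2⟩⟩)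
    · exact Or.inr h
    · exact absurd e1.symm hab
    · exact absurd e1 hbx
    · exact Or.inl e2
    · exact absurd e1 hby
  · rintro (rfl | h)
    · tauto
    · refine Or.inl ⟨h, ?_⟩
      rintro (⟨e1, e2⟩ | ⟨e1, e2⟩)
      · exact hbx e1
      · exact hby e1

lemma swapE_nset_x (hax : a ≠ x) (hxy : x ≠ y) (hxb : x ≠ b) :
    (swapE G a b x y).neighborSet x = insert a (G.neighborSet x \ {y}) := by
  ext w
  simp only [SimpleGraph.mem_neighborSet, swapE, Set.mem_insert_iff, Set.mem_diff,
    Set.mem_singleton_iff]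
  constructor
  · rintro (⟨h, h2⟩ | ⟨hne, ⟨e1, e2⟩ | ⟨e1, e2⟩ | ⟨e1, e2⟩ | ⟨e1, e2⟩⟩)
    · refine Or.inr ⟨h, ?_⟩; intro hw; tauto
    · exact Or.inl (e2.trans e1)
    · exact Or.inl e2
    · exact absurd e1 hxb
    · exact absurd e1 hxy
  · rintro (rfl | ⟨h, hw⟩)
    · tauto
    · refine Or.inl ⟨h, ?_⟩
      rintro (⟨e1, e2⟩ | ⟨e1, e2⟩)
      · exact hw e2
      · exact hxy e1

lemma swapE_nset_y (hby : b ≠ y) (hxy : x ≠ y) (hya : y ≠ a) :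
    (swapE G a b x y).neighborSet y = insert b (G.neighborSet y \ {x}) := by
  ext w
  simp only [SimpleGraph.mem_neighborSet, swapE, Set.mem_insert_iff, Set.mem_diff,
    Set.mem_singleton_iff]
  constructor
  · rintro (⟨h, h2⟩ | ⟨hne, ⟨e1, e2⟩ | ⟨e1, e2⟩ | ⟨e1, e2⟩ | ⟨e1, e2⟩⟩)
    · refine Or.inr ⟨h, ?_⟩; intro hw; tauto
    · exact (hya e1).elim
    · exact (hxy e1.symm).elim
    · exact (hby e1.symm).elim
    · exact Or.inl e2
  · rintro (rfl | ⟨h, hw⟩)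
    · tauto
    · refine Or.inl ⟨h, ?_⟩
      rintro (⟨e1, e2⟩ | ⟨e1, e2⟩)
      · exact hxy e1.symm
      · exact hw e2

lemma swapE_nset_other (hva : v ≠ a) (hvb : v ≠ b) (hvx : v ≠ x) (hvy : v ≠ y) :
    (swapE G a b x y).neighborSet v = G.neighborSet v := by
  ext w
  simp only [SimpleGraph.mem_neighborSet, swapE]
  constructor
  · rintro (⟨h, _⟩ | ⟨hne, ⟨e1, e2⟩ | ⟨e1, e2⟩ | ⟨e1, e2⟩ | ⟨e1, e2⟩⟩)
    · exact h
    · exact absurd e1 hva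
    · exact absurd e1 hvx
    · exact absurd e1 hvb
    · exact absurd e1 hvy
  · intro h
    refine Or.inl ⟨h, ?_⟩
    rintro (⟨e1, e2⟩ | ⟨e1, e2⟩)
    · exact hvx e1
    · exact hvy e1


lemma sum_split (f : ℕ → ℕ) {a b c : ℕ} (hab : a ≤ b) (hbc : b ≤ c) :
    ∑ i ∈ Icc (a+1) c, f i = ∑ i ∈ Icc (a+1) b, f i + ∑ i ∈ Icc (b+1) c, f i := by
  simp only [Finset.Icc_add_one_left_eq_Ioc]
  rw [Finset.sum_Ioc_consecutive _ hab hbc]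

lemma c3arith (k d1 p T : ℤ) (hk : 1 ≤ k) (hd1 : k + 1 ≤ d1) (hT : 1 ≤ T)
    (heq : k * d1 = k * (k-1) + (p-k)*k + T)
    (hle : (k+1)*d1 ≤ (k+1)*k + (p-(k+1))*(k+1) + T) : False := by
  have h1 : d1 ≤ p - 1 := by nlinarith [hle, heq]
  have hTk : k * (d1 - p + 1) = T := by linear_combination heq
  nlinarith [mul_nonpos_of_nonneg_of_nonpos (by linarith : (0:ℤ) ≤ k)
    (by linarith : d1 - p + 1 ≤ 0)]

lemma c2arith (k u s d1 A : ℤ) (hk : 1 ≤ k) (hu : k + 1 ≤ u) (hs : u + 1 ≤ s)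
    (hd1 : 1 ≤ d1) (hd1k : d1 ≤ k) (heq : k * d1 = k * (k-1) + A)
    (hA : (u - k) * d1 + (s - u) ≤ A) : False := by
  rcases le_or_gt u (2*k) with h | h
  · nlinarith [mul_nonneg (by linarith : (0:ℤ) ≤ 2*k - u) (by linarith : (0:ℤ) ≤ k - d1),
               mul_nonneg (by linarith : (0:ℤ) ≤ k) (by linarith : (0:ℤ) ≤ u - k - 1)]
  · nlinarith [mul_nonneg (by linarith : (0:ℤ) ≤ u - 2*k) (by linarith : (0:ℤ) ≤ d1 - 1),
               mul_nonneg (by linarith : (0:ℤ) ≤ k) (by linarith : (0:ℤ) ≤ k - 1)]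


lemma step_graph (D : ℕ → ℕ) {u s : ℕ} (hu1 : 1 ≤ u) (hus : u < s) (hsn : s ≤ n)
    (hub : D u + 2 ≤ s)
    (hbig : ∀ j, 1 ≤ j → j < s → j ≠ u → D s + 1 ≤ D j)
    (G : SimpleGraph (Fin n)) (hG : ∀ v : Fin n, Nat.card (G.neighborSet v) = D (v.1 + 1)) :
    ∃ H : SimpleGraph (Fin n), ∀ v : Fin n,
      Nat.card (H.neighborSet v) = D (v.1 + 1) + (if v.1 + 1 = u ∨ v.1 + 1 = s then 1 else 0) := by
  classical
  have hu0 : u - 1 < n := by omega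
  have hs0 : s - 1 < n := by omega
  set U : Fin n := ⟨u - 1, hu0⟩ with hUdef
  set S : Fin n := ⟨s - 1, hs0⟩ with hSdef
  have hUu : U.1 + 1 = u := by simp [hUdef]; omega
  have hSs : S.1 + 1 = s := by simp [hSdef]; omega
  have hvalU : ∀ v : Fin n, v.1 + 1 = u ↔ v = U := by
    intro v; constructor
    · intro h; apply Fin.ext; simp [hUdef]; omega
    · rintro rfl; exact hUu
  have hvalS : ∀ v : Fin n, v.1 + 1 = s ↔ v = S := by
    intro v; constructor
    · intro h; apply Fin.ext; simp [hSdef]; omega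
    · rintro rfl; exact hSs
  have hUS : U ≠ S := by
    intro h; have := congrArg Fin.val h; simp [hUdef, hSdef] at this; omega
  have hGf : ∀ v : Fin n, (G.neighborFinset v).card = D (v.1 + 1) := by
    intro v
    rw [← hG v, SimpleGraph.neighborFinset_def, Set.toFinset_card, Nat.card_eq_fintype_card]
  by_cases hadj : G.Adj U S
  · -- find x not adjacent to U
    have hx : ∃ x : Fin n, x.1 + 1 ≤ s ∧ x ≠ U ∧ x ≠ S ∧ ¬ G.Adj U x := by
      by_contra hcon
      push_neg at hcon
      have hsub : Finset.Icc 1 s ⊆ insert u ((G.neighborFinset U).image (fun v => v.1 + 1)) := by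
        intro j hj
        rw [Finset.mem_Icc] at hj
        rcases eq_or_ne j u with rfl | hju
        · exact Finset.mem_insert_self _ _
        · refine Finset.mem_insert_of_mem ?_
          rw [Finset.mem_image]
          rcases eq_or_ne j s with rfl | hjs
          · exact ⟨S, by rwa [SimpleGraph.mem_neighborFinset], hSs⟩
          · have hj1 : j - 1 < n := by omega
            refine ⟨⟨j - 1, hj1⟩, ?_, by simp; omega⟩
            rw [SimpleGraph.mem_neighborFinset]
            apply hcon ⟨j - 1, hj1⟩ (by simp; omega)
            · intro h; have := congrArg Fin.val h; simp [hUdef] at this; omega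
            · intro h; have := congrArg Fin.val h; simp [hSdef] at this; omega
      have hcard := Finset.card_le_card hsub
      rw [Nat.card_Icc] at hcard
      have h2 := Finset.card_insert_le u ((G.neighborFinset U).image (fun v => v.1 + 1))
      have h3 := Finset.card_image_le (s := G.neighborFinset U) (f := fun v : Fin n => v.1 + 1)
      rw [hGf U, hUu] at h3
      omega
    obtain ⟨x, hxs, hxU, hxS, hxadj⟩ := hx
    have hdx : D s + 1 ≤ D (x.1 + 1) := by
      apply hbig (x.1 + 1) (by omega)
      · have : x.1 + 1 ≠ s := fun h => hxS ((hvalS x).mp h)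
        omega
      · exact fun h => hxU ((hvalU x).mp h)
    have hy : ∃ y : Fin n, G.Adj x y ∧ y ≠ S ∧ ¬ G.Adj S y := by
      by_contra hcon
      push_neg at hcon
      have hsub : G.neighborFinset x ⊆ (insert S (G.neighborFinset S)).erase U := by
        intro y hy
        rw [SimpleGraph.mem_neighborFinset] at hy
        rw [Finset.mem_erase]
        constructor
        · rintro rfl; exact hxadj hy.symm
        · rcases eq_or_ne y S with rfl | hyS
          · exact Finset.mem_insert_self _ _
          · exact Finset.mem_insert_of_mem (by
              rw [SimpleGraph.mem_neighborFinset]; exact hcon y hy hyS)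
      have hcard := Finset.card_le_card hsub
      have hUm : U ∈ insert S (G.neighborFinset S) :=
        Finset.mem_insert_of_mem (by rw [SimpleGraph.mem_neighborFinset]; exact hadj.symm)
      rw [Finset.card_erase_of_mem hUm] at hcard
      have h2 := Finset.card_insert_le S (G.neighborFinset S)
      rw [hGf x] at hcard
      rw [hGf S, hSs] at h2
      omega
    obtain ⟨y, hxy, hyS, hSy⟩ := hy
    have hyU : y ≠ U := by rintro rfl; exact hxadj hxy.symm
    have hxyne : x ≠ y := G.ne_of_adj hxy
    refine ⟨swapE G U S x y, ?_⟩
    intro v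
    rcases eq_or_ne v U with rfl | hvU
    · rw [swapE_nset_a (Ne.symm hxU) (Ne.symm hyU) hUS, hUu]
      have hxm : x ∉ G.neighborSet U := by rw [SimpleGraph.mem_neighborSet]; exact hxadj
      rw [Nat.card_coe_set_eq, Set.ncard_insert_of_notMem hxm,
        ← Nat.card_coe_set_eq, hG U, hUu]
      simp
    · rcases eq_or_ne v S with rfl | hvS
      · rw [swapE_nset_b (Ne.symm hxS) (Ne.symm hyS) hUS, hSs]
        have hym : y ∉ G.neighborSet S := by rw [SimpleGraph.mem_neighborSet]; exact hSy
        rw [Nat.card_coe_set_eq, Set.ncard_insert_of_notMem hym,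
          ← Nat.card_coe_set_eq, hG S, hSs]
        have : ¬ (s = u) := by omega
        simp [this]
      · have hcond : ¬ (v.1 + 1 = u ∨ v.1 + 1 = s) := by
          rintro (h | h)
          · exact hvU ((hvalU v).mp h)
          · exact hvS ((hvalS v).mp h)
        rcases eq_or_ne v x with rfl | hvx
        · rw [swapE_nset_x (Ne.symm hxU) hxyne hxS]
          have hUm : U ∉ G.neighborSet v := by
            rw [SimpleGraph.mem_neighborSet]; intro h; exact hxadj h.symm
          have hym : y ∈ G.neighborSet v := by rwa [SimpleGraph.mem_neighborSet]
          rw [Nat.card_coe_set_eq, Set.ncard_exchange hUm hym,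
            ← Nat.card_coe_set_eq, hG v]
          simp [hcond]
        · rcases eq_or_ne v y with rfl | hvy
          · rw [swapE_nset_y (Ne.symm hyS) hxyne hyU]
            have hSm : S ∉ G.neighborSet v := by
              rw [SimpleGraph.mem_neighborSet]; intro h; exact hSy h.symm
            have hxm : x ∈ G.neighborSet v := by
              rw [SimpleGraph.mem_neighborSet]; exact hxy.symm
            rw [Nat.card_coe_set_eq, Set.ncard_exchange hSm hxm,
              ← Nat.card_coe_set_eq, hG v]
            simp [hcond]
          · rw [swapE_nset_other hvU hvS hvx hvy, hG v]
            simp [hcond]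
  · refine ⟨addE G U S, ?_⟩
    intro v
    rw [addE_nset G hUS v]
    rcases eq_or_ne v U with rfl | hvU
    · rw [if_pos rfl]
      have hSm : S ∉ G.neighborSet U := by rw [SimpleGraph.mem_neighborSet]; exact hadj
      rw [Nat.card_coe_set_eq, Set.ncard_insert_of_notMem hSm,
        ← Nat.card_coe_set_eq, hG U, hUu]
      simp
    · rw [if_neg hvU]
      rcases eq_or_ne v S with rfl | hvS
      · rw [if_pos rfl]
        have hUm : U ∉ G.neighborSet S := by
          rw [SimpleGraph.mem_neighborSet]; intro h; exact hadj h.symm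
        rw [Nat.card_coe_set_eq, Set.ncard_insert_of_notMem hUm,
          ← Nat.card_coe_set_eq, hG S, hSs]
        have : ¬ (s = u) := by omega
        simp [this]
      · rw [if_neg hvS, hG v]
        have hcond : ¬ (v.1 + 1 = u ∨ v.1 + 1 = s) := by
          rintro (h | h)
          · exact hvU ((hvalU v).mp h)
          · exact hvS ((hvalS v).mp h)
        simp [hcond]

lemma egSuff (N : ℕ) : ∀ d : ℕ → ℕ, (∑ i ∈ Icc 1 n, d i) = N →
    (∀ i j, 1 ≤ i → i ≤ j → j ≤ n → d j ≤ d i) →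
    Even N →
    (∀ k, 1 ≤ k → k ≤ n → ∑ i ∈ Icc 1 k, d i ≤ k * (k - 1) + ∑ j ∈ Icc (k + 1) n, min (d j) k) →
    ∃ G : SimpleGraph (Fin n), ∀ v : Fin n, Nat.card (G.neighborSet v) = d (v.1 + 1) := by
  induction N using Nat.strong_induction_on with
  | _ N IH =>
  intro d hsum hmono heven hEG
  rcases Nat.eq_zero_or_pos N with rfl | hNpos
  · refine ⟨⊥, ?_⟩
    intro v
    have hz : d (v.1 + 1) = 0 := by
      have := (Finset.sum_eq_zero_iff.mp hsum) (v.1 + 1)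
        (by rw [Finset.mem_Icc]; exact ⟨by omega, by omega⟩)
      exact this
    rw [hz]
    have : (⊥ : SimpleGraph (Fin n)).neighborSet v = ∅ := by
      ext w; simp
    rw [this]
    simp
  -- positive case
  classical
  have hex : ∃ i, 1 ≤ i ∧ i ≤ n ∧ 1 ≤ d i := by
    by_contra hcon
    push_neg at hcon
    have : ∑ i ∈ Icc 1 n, d i = 0 := by
      apply Finset.sum_eq_zero
      intro i hi
      rw [Finset.mem_Icc] at hi
      have := hcon i hi.1 hi.2
      omega
    omega
  obtain ⟨i0, hi01, hi0n, hdi0⟩ := hex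
  set s := Nat.findGreatest (fun i => 1 ≤ d i) n with hsdef
  have hs1 : 1 ≤ s := le_trans hi01 (Nat.le_findGreatest hi0n hdi0)
  have hsn : s ≤ n := Nat.findGreatest_le n
  have hds : 1 ≤ d s := Nat.findGreatest_spec (P := fun i => 1 ≤ d i) hi0n hdi0
  have hzero : ∀ j, s < j → j ≤ n → d j = 0 := by
    intro j hj hjn
    have := Nat.findGreatest_is_greatest (P := fun i => 1 ≤ d i) hj hjn
    omega
  have hpos : ∀ j, 1 ≤ j → j ≤ s → 1 ≤ d j := by
    intro j h1 h2
    exact le_trans hds (hmono j s h1 h2 hsn)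
  -- d 1 ≤ s - 1
  have hd1s : d 1 + 1 ≤ s := by
    have h1 := hEG 1 le_rfl (by omega)
    have h2 : ∑ i ∈ Icc 1 1, d i = d 1 := by simp
    have h3 : ∑ j ∈ Icc 2 n, min (d j) 1 = s - 1 := by
      have hsp : ∑ j ∈ Icc (1+1) n, min (d j) 1
          = ∑ j ∈ Icc (1+1) s, min (d j) 1 + ∑ j ∈ Icc (s+1) n, min (d j) 1 :=
        sum_split _ hs1 hsn
      have e1 : ∑ j ∈ Icc 2 s, min (d j) 1 = ∑ j ∈ Icc 2 s, 1 := by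
        apply Finset.sum_congr rfl
        intro j hj
        rw [Finset.mem_Icc] at hj
        have := hpos j (by omega) hj.2
        omega
      have e2 : ∑ j ∈ Icc (s+1) n, min (d j) 1 = 0 := by
        apply Finset.sum_eq_zero
        intro j hj
        rw [Finset.mem_Icc] at hj
        have := hzero j (by omega) hj.2
        omega
      rw [show (1+1 : ℕ) = 2 from rfl] at hsp
      rw [hsp, e1, e2, Finset.sum_const, Nat.card_Icc]
      simp
    rw [h2, h3] at h1
    have hd11 : 1 ≤ d 1 := hpos 1 le_rfl hs1
    omega
  have hs2 : 2 ≤ s := by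
    have := hpos 1 le_rfl hs1
    omega
  -- t : least index with plateau end
  have hQex : ∃ i, 1 ≤ i ∧ (i = s ∨ d (i+1) < d i) := ⟨s, ⟨hs1, Or.inl rfl⟩⟩
  set t := Nat.find hQex with htdef
  have htP : 1 ≤ t ∧ (t = s ∨ d (t+1) < d t) := Nat.find_spec hQex
  have hts : t ≤ s := Nat.find_min' hQex ⟨hs1, Or.inl rfl⟩
  have hconst : ∀ i, 1 ≤ i → i ≤ t → d i = d 1 := by
    intro i
    induction i with
    | zero => intro h _; omega
    | succ j IHj =>
      intro _ h2
      rcases Nat.eq_zero_or_pos j with rfl | hj1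
      · rfl
      · have hjt : j < t := by omega
        have hnQ : ¬(1 ≤ j ∧ (j = s ∨ d (j+1) < d j)) := Nat.find_min hQex hjt
        have hnd : d j ≤ d (j+1) := by
          by_contra hlt
          push_neg at hlt
          exact hnQ ⟨hj1, Or.inr hlt⟩
        have hle : d (j+1) ≤ d j := hmono j (j+1) hj1 (by omega) (by omega)
        have hdj := IHj hj1 (by omega)
        omega
  -- u
  set u := if t < s then t else s - 1 with hudef
  have hu1 : 1 ≤ u := by
    rw [hudef]; split <;> omega
  have hus : u < s := by
    rw [hudef]; split <;> omega
  have hut : u ≤ t := by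
    rw [hudef]; split <;> omega
  have huc : ∀ i, 1 ≤ i → i ≤ u → d i = d 1 := fun i h1 h2 => hconst i h1 (le_trans h2 hut)
  have hdu : 1 ≤ d u := hpos u hu1 (le_of_lt hus)
  have hstep : t < s → d (t+1) < d t := by
    intro h
    rcases htP.2 with he | hlt
    · omega
    · exact hlt
  -- d'
  set d' : ℕ → ℕ := fun i => if i = u then d u - 1 else if i = s then d s - 1 else d i
    with hd'def
  have hd'u : d' u = d u - 1 := by simp [hd'def]
  have hd's : d' s = d s - 1 := by
    have : ¬ (s = u) := by omega
    simp [hd'def, this]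
  have hd'o : ∀ i, i ≠ u → i ≠ s → d' i = d i := by
    intro i h1 h2; simp [hd'def, h1, h2]
  have hpt : ∀ i, d i = d' i + ((if i = u then 1 else 0) + (if i = s then 1 else 0)) := by
    intro i
    rcases eq_or_ne i u with rfl | h1
    · have hne : ¬ (u = s) := by omega
      simp [hd'u, hne]
      omega
    · rcases eq_or_ne i s with rfl | h2
      · simp [hd's, h1]
        omega
      · simp [hd'o i h1 h2, h1, h2]
  have hsumbox : ∀ a c : ℕ, (∑ i ∈ Icc a c, d i)
      = (∑ i ∈ Icc a c, d' i) + ((if u ∈ Icc a c then 1 else 0) + (if s ∈ Icc a c then 1 else 0)) := by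
    intro a c
    rw [← Finset.sum_ite_eq' (Icc a c) u (fun _ => 1),
        ← Finset.sum_ite_eq' (Icc a c) s (fun _ => 1),
        ← Finset.sum_add_distrib, ← Finset.sum_add_distrib]
    exact Finset.sum_congr rfl (fun i _ => hpt i)
  -- monotonicity of d'
  have hmono' : ∀ i j, 1 ≤ i → i ≤ j → j ≤ n → d' j ≤ d' i := by
    intro i j h1 hij hjn
    rcases eq_or_ne i u with rfl | hiu
    · rcases eq_or_ne j u with rfl | hju
      · exact le_refl _
      · rcases eq_or_ne j s with rfl | hjs
        · rw [hd'u, hd's]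
          have := hmono u s hu1 (le_of_lt hus) hsn
          omega
        · rw [hd'u, hd'o j hju hjs]
          rcases lt_or_ge s j with hlt | hle
          · have := hzero j hlt hjn
            omega
          · -- i = u < j < s, j ≠ s so j < s; forces t < s
            have hjls : j < s := by omega
            have htlt : t < s := by
              by_contra hc
              push_neg at hc
              have : u = s - 1 := by rw [hudef]; simp [not_lt.mpr hc]
              omega
            have hueq : u = t := by rw [hudef]; simp [htlt]
            have h3 : d j ≤ d (t+1) := by
              apply hmono (t+1) j (by omega) (by omega) hjn
            have h4 := hstep htlt
            have h5 : d u = d t := by rw [hueq]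
            omega
    · rcases eq_or_ne i s with rfl | his
      · rcases eq_or_ne j s with rfl | hjs
        · exact le_refl _
        · have hju : j ≠ u := by omega
          rw [hd's, hd'o j hju hjs]
          have := hzero j (by omega) hjn
          omega
      · rw [hd'o i hiu his]
        rcases eq_or_ne j u with rfl | hju
        · rw [hd'u]
          have := hmono i u h1 hij hjn
          omega
        · rcases eq_or_ne j s with rfl | hjs
          · rw [hd's]
            have := hmono i s h1 hij hjn
            omega
          · rw [hd'o j hju hjs]
            exact hmono i j h1 hij hjn
  have hd'le : ∀ i, d' i ≤ d i := by
    intro i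
    rcases eq_or_ne i u with rfl | h1
    · rw [hd'u]; omega
    · rcases eq_or_ne i s with rfl | h2
      · rw [hd's]; omega
      · rw [hd'o i h1 h2]
  -- EG for d'
  have hEG' : ∀ k, 1 ≤ k → k ≤ n →
      ∑ i ∈ Icc 1 k, d' i ≤ k * (k - 1) + ∑ j ∈ Icc (k + 1) n, min (d' j) k := by
    intro k hk1 hkn
    have hEGk := hEG k hk1 hkn
    rcases le_or_gt s k with hsk | hks
    · -- case a : s ≤ k
      have hL : ∑ i ∈ Icc 1 k, d i
          = ∑ i ∈ Icc 1 k, d' i + ((if u ∈ Icc 1 k then 1 else 0) + (if s ∈ Icc 1 k then 1 else 0)) :=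
        hsumbox 1 k
      rw [if_pos (by rw [mem_Icc]; omega : u ∈ Icc 1 k),
          if_pos (by rw [mem_Icc]; omega : s ∈ Icc 1 k)] at hL
      have hR : ∑ j ∈ Icc (k+1) n, min (d' j) k = ∑ j ∈ Icc (k+1) n, min (d j) k := by
        apply Finset.sum_congr rfl
        intro j hj
        rw [mem_Icc] at hj
        rw [hd'o j (by omega) (by omega)]
      rw [hR]
      set Q := k * (k - 1)
      omega
    · rcases le_or_gt u k with huk | hku
      · -- case b : u ≤ k < s
        have hL : ∑ i ∈ Icc 1 k, d i
            = ∑ i ∈ Icc 1 k, d' i + ((if u ∈ Icc 1 k then 1 else 0) + (if s ∈ Icc 1 k then 1 else 0)) :=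
          hsumbox 1 k
        rw [if_pos (by rw [mem_Icc]; omega : u ∈ Icc 1 k),
            if_neg (by rw [mem_Icc]; omega : ¬ s ∈ Icc 1 k)] at hL
        have hs_mem : s ∈ Icc (k+1) n := by rw [mem_Icc]; omega
        have hR1 := (Finset.add_sum_erase _ (fun j => min (d j) k) hs_mem).symm
        have hR2 := (Finset.add_sum_erase _ (fun j => min (d' j) k) hs_mem).symm
        have hR3 : ∑ j ∈ (Icc (k+1) n).erase s, min (d' j) k
            = ∑ j ∈ (Icc (k+1) n).erase s, min (d j) k := by
          apply Finset.sum_congr rfl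
          intro j hj
          rw [Finset.mem_erase, mem_Icc] at hj
          rw [hd'o j (by omega) hj.1]
        rw [hR2, hR3, hd's]
        rw [hR1] at hEGk
        set Q := k * (k - 1)
        omega
      · -- case c : k < u
        have hL : ∑ i ∈ Icc 1 k, d i
            = ∑ i ∈ Icc 1 k, d' i + ((if u ∈ Icc 1 k then 1 else 0) + (if s ∈ Icc 1 k then 1 else 0)) :=
          hsumbox 1 k
        rw [if_neg (by rw [mem_Icc]; omega : ¬ u ∈ Icc 1 k),
            if_neg (by rw [mem_Icc]; omega : ¬ s ∈ Icc 1 k)] at hL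
        have hLk : ∑ i ∈ Icc 1 k, d i = k * d 1 := by
          calc ∑ i ∈ Icc 1 k, d i = ∑ _i ∈ Icc 1 k, d 1 :=
                Finset.sum_congr rfl (fun i hi => by
                  rw [mem_Icc] at hi
                  exact huc i hi.1 (by omega))
            _ = k * d 1 := by
                rw [Finset.sum_const, Nat.card_Icc, smul_eq_mul, Nat.add_sub_cancel]
        rcases le_or_gt (k+1) (d s) with hc1 | hc2
        · -- c1 : d s ≥ k+1
          have hR : ∑ j ∈ Icc (k+1) n, min (d' j) k = ∑ j ∈ Icc (k+1) n, min (d j) k := by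
            apply Finset.sum_congr rfl
            intro j hj
            rw [mem_Icc] at hj
            rcases eq_or_ne j u with rfl | hju
            · rw [hd'u]
              have hduk : k + 1 ≤ d u := le_trans hc1 (hmono u s hu1 (le_of_lt hus) hsn)
              omega
            · rcases eq_or_ne j s with rfl | hjs
              · rw [hd's]
                omega
              · rw [hd'o j hju hjs]
          rw [hR]
          set Q := k * (k - 1)
          omega
        · by_cases hc2' : d 1 ≤ k
          · -- c2 : all values ≤ k
            have hNsplit : ∑ i ∈ Icc 1 n, d i
                = ∑ i ∈ Icc 1 k, d i + ∑ i ∈ Icc (k+1) n, d i :=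
              sum_split d (Nat.zero_le k) hkn
            have hdleK : ∀ j, 1 ≤ j → j ≤ n → d j ≤ k := by
              intro j h1 h2
              exact le_trans (hmono 1 j le_rfl h1 h2) hc2'
            have hminsA : ∑ j ∈ Icc (k+1) n, min (d j) k = ∑ j ∈ Icc (k+1) n, d j := by
              apply Finset.sum_congr rfl
              intro j hj
              rw [mem_Icc] at hj
              have := hdleK j (by omega) hj.2
              omega
            have hminsA' : ∑ j ∈ Icc (k+1) n, min (d' j) k = ∑ j ∈ Icc (k+1) n, d' j := by
              apply Finset.sum_congr rfl
              intro j hj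
              rw [mem_Icc] at hj
              have h2 := hdleK j (by omega) hj.2
              have h3 := hd'le j
              omega
            have hbox2 : ∑ i ∈ Icc (k+1) n, d i
                = ∑ i ∈ Icc (k+1) n, d' i + ((if u ∈ Icc (k+1) n then 1 else 0) + (if s ∈ Icc (k+1) n then 1 else 0)) :=
              hsumbox (k+1) n
            rw [if_pos (by rw [mem_Icc]; omega : u ∈ Icc (k+1) n),
                if_pos (by rw [mem_Icc]; omega : s ∈ Icc (k+1) n)] at hbox2
            have hlow : (u - k) * d 1 + (s - u) ≤ ∑ i ∈ Icc (k+1) n, d i := by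
              have hsplit2 : ∑ i ∈ Icc (k+1) n, d i
                  = ∑ i ∈ Icc (k+1) u, d i + ∑ i ∈ Icc (u+1) n, d i :=
                sum_split d (le_of_lt hku) (by omega)
              have hsplit3 : ∑ i ∈ Icc (u+1) n, d i
                  = ∑ i ∈ Icc (u+1) s, d i + ∑ i ∈ Icc (s+1) n, d i :=
                sum_split d (le_of_lt hus) hsn
              have e1 : ∑ i ∈ Icc (k+1) u, d i = (u - k) * d 1 := by
                calc ∑ i ∈ Icc (k+1) u, d i = ∑ _i ∈ Icc (k+1) u, d 1 :=
                      Finset.sum_congr rfl (fun i hi => by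
                        rw [mem_Icc] at hi
                        exact huc i (by omega) hi.2)
                  _ = (u - k) * d 1 := by
                      rw [Finset.sum_const, Nat.card_Icc, smul_eq_mul]
                      have huk1 : u + 1 - (k+1) = u - k := by omega
                      rw [huk1]
              have e2 : s - u ≤ ∑ i ∈ Icc (u+1) s, d i := by
                calc s - u = ∑ _i ∈ Icc (u+1) s, 1 := by
                      rw [Finset.sum_const, Nat.card_Icc, smul_eq_mul, mul_one]; omega
                  _ ≤ ∑ i ∈ Icc (u+1) s, d i := by
                      apply Finset.sum_le_sum
                      intro i hi
                      rw [mem_Icc] at hi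
                      exact hpos i (by omega) hi.2
              omega
            rw [hminsA']
            by_contra hcon
            push_neg at hcon
            obtain ⟨w, hw⟩ := heven
            obtain ⟨q, hq⟩ : Even (k * (k-1)) := by
              rcases Nat.even_or_odd k with he | ho
              · exact he.mul_right _
              · have : Even (k - 1) := Nat.Odd.sub_odd ho odd_one
                exact this.mul_left _
            have heq : k * d 1 = k * (k-1) + ∑ i ∈ Icc (k+1) n, d i := by
              rw [hLk, hminsA] at hEGk
              rw [hLk] at hL
              set P := k * d 1
              set Q := k * (k - 1)
              set A := ∑ i ∈ Icc (k+1) n, d i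
              set B := ∑ i ∈ Icc (k+1) n, d' i
              set L' := ∑ i ∈ Icc 1 k, d' i
              omega
            have hd11 : 1 ≤ d 1 := hpos 1 le_rfl hs1
            zify [hk1] at heq
            zify [le_of_lt hku, le_of_lt hus] at hlow
            exact (c2arith (k : ℤ) (u : ℤ) (s : ℤ) (d 1 : ℤ) (∑ x ∈ Icc (k+1) n, ((d x : ℤ)))
              (by exact_mod_cast hk1) (by exact_mod_cast hku) (by exact_mod_cast hus)
              (by exact_mod_cast hd11) (by exact_mod_cast hc2') heq hlow).elim
          · -- c3 : d s ≤ k < d 1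
            have hd1k : k + 1 ≤ d 1 := by omega
            have hksn : k + 1 ≤ n := by omega
            set p := Nat.findGreatest (fun i => k+1 ≤ d i) n with hpdef
            have hdk1 : d (k+1) = d 1 := huc (k+1) (by omega) (by omega)
            have hpk : k + 1 ≤ p := Nat.le_findGreatest hksn (by
              show k + 1 ≤ d (k+1)
              rw [hdk1]; exact hd1k)
            have hpn : p ≤ n := Nat.findGreatest_le n
            have hdp : k + 1 ≤ d p := Nat.findGreatest_spec (P := fun i => k+1 ≤ d i) hksn (by
              show k + 1 ≤ d (k+1)
              rw [hdk1]; exact hd1k)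
            have hps : p < s := by
              by_contra hc
              push_neg at hc
              have : d p ≤ d s := hmono s p hs1 hc hpn
              omega
            have hbigp : ∀ j, 1 ≤ j → j ≤ p → k + 1 ≤ d j :=
              fun j h1 h2 => le_trans hdp (hmono j p h1 h2 hpn)
            have hsmallp : ∀ j, p < j → j ≤ n → d j ≤ k := by
              intro j h1 h2
              have := Nat.findGreatest_is_greatest (P := fun i => k+1 ≤ d i) h1 h2
              omega
            have hM : ∑ j ∈ Icc (k+1) n, min (d j) k
                = (p - k) * k + ∑ j ∈ Icc (p+1) n, d j := by
              rw [sum_split (fun j => min (d j) k) (by omega : k ≤ p) hpn]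
              congr 1
              · calc ∑ j ∈ Icc (k+1) p, min (d j) k = ∑ _j ∈ Icc (k+1) p, k :=
                      Finset.sum_congr rfl (fun j hj => by
                        rw [mem_Icc] at hj
                        have := hbigp j (by omega) hj.2
                        omega)
                  _ = (p - k) * k := by
                      rw [Finset.sum_const, Nat.card_Icc, smul_eq_mul]
                      have : p + 1 - (k+1) = p - k := by omega
                      rw [this]
              · apply Finset.sum_congr rfl
                intro j hj
                rw [mem_Icc] at hj
                have := hsmallp j (by omega) hj.2
                omega
            have hs_mem : s ∈ Icc (k+1) n := by rw [mem_Icc]; omega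
            have hR1 := (Finset.add_sum_erase _ (fun j => min (d j) k) hs_mem).symm
            have hR2 := (Finset.add_sum_erase _ (fun j => min (d' j) k) hs_mem).symm
            have hR3 : ∑ j ∈ (Icc (k+1) n).erase s, min (d' j) k
                = ∑ j ∈ (Icc (k+1) n).erase s, min (d j) k := by
              apply Finset.sum_congr rfl
              intro j hj
              rw [Finset.mem_erase, mem_Icc] at hj
              rcases eq_or_ne j u with rfl | hju
              · rw [hd'u]
                have : k + 1 ≤ d u := by
                  have := huc u hu1 le_rfl
                  omega
                omega
              · rw [hd'o j hju hj.1]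
            by_contra hcon
            push_neg at hcon
            have hsmem2 : s ∈ Icc (p+1) n := by rw [mem_Icc]; omega
            have hT : 1 ≤ ∑ j ∈ Icc (p+1) n, d j :=
              le_trans hds (Finset.single_le_sum (f := d) (fun i _ => Nat.zero_le _) hsmem2)
            have hEGk1 := hEG (k+1) (by omega) (by omega)
            have hLk1 : ∑ i ∈ Icc 1 (k+1), d i = (k+1) * d 1 := by
              calc ∑ i ∈ Icc 1 (k+1), d i = ∑ _i ∈ Icc 1 (k+1), d 1 :=
                    Finset.sum_congr rfl (fun i hi => by
                      rw [mem_Icc] at hi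
                      exact huc i hi.1 (by omega))
                _ = (k+1) * d 1 := by
                    rw [Finset.sum_const, Nat.card_Icc, smul_eq_mul, Nat.add_sub_cancel]
            have hM2 : ∑ j ∈ Icc (k+1+1) n, min (d j) (k+1)
                = (p - (k+1)) * (k+1) + ∑ j ∈ Icc (p+1) n, d j := by
              rw [sum_split (fun j => min (d j) (k+1)) (by omega : k + 1 ≤ p) hpn]
              congr 1
              · calc ∑ j ∈ Icc (k+1+1) p, min (d j) (k+1) = ∑ _j ∈ Icc (k+1+1) p, (k+1) :=
                      Finset.sum_congr rfl (fun j hj => by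
                        rw [mem_Icc] at hj
                        have := hbigp j (by omega) hj.2
                        omega)
                  _ = (p - (k+1)) * (k+1) := by
                      rw [Finset.sum_const, Nat.card_Icc, smul_eq_mul]
                      have : p + 1 - (k+1+1) = p - (k+1) := by omega
                      rw [this]
              · apply Finset.sum_congr rfl
                intro j hj
                rw [mem_Icc] at hj
                have := hsmallp j (by omega) hj.2
                omega
            have heqN : k * d 1 = k * (k-1) + (p - k) * k + ∑ j ∈ Icc (p+1) n, d j := by
              have h1 := hEGk
              rw [hLk, hR1] at h1
              have h2 := hcon
              rw [hR2, hR3] at h2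
              have h3 := hM
              rw [hR1] at h3
              have h4 := hL
              have h5 := hLk
              have h6 := hd's
              set P := k * d 1
              set Q := k * (k - 1)
              set R := (p - k) * k
              omega
            have hleN : (k+1) * d 1 ≤ (k+1) * k + (p - (k+1)) * (k+1) + ∑ j ∈ Icc (p+1) n, d j := by
              rw [hLk1, hM2] at hEGk1
              have hkk : k + 1 - 1 = k := by omega
              rw [hkk] at hEGk1
              set P := (k+1) * d 1
              set Q := (k+1) * k
              set R := (p - (k+1)) * (k+1)
              omega
            zify [hk1, (by omega : k ≤ p)] at heqN
            zify [(by omega : k + 1 ≤ p)] at hleN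
            exact (c3arith (k : ℤ) (d 1 : ℤ) (p : ℤ) (∑ j ∈ Icc (p+1) n, ((d j : ℤ)))
              (by exact_mod_cast hk1) (by exact_mod_cast hd1k)
              (by exact_mod_cast hT) heqN hleN).elim
  -- assemble
  have hsum' : ∑ i ∈ Icc 1 n, d' i + 2 = N := by
    have hbox := hsumbox 1 n
    rw [if_pos (by rw [mem_Icc]; omega : u ∈ Icc 1 n),
        if_pos (by rw [mem_Icc]; omega : s ∈ Icc 1 n)] at hbox
    omega
  have heven' : Even (N - 2) := by
    obtain ⟨w, hw⟩ := heven
    exact ⟨w - 1, by omega⟩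
  obtain ⟨G, hG⟩ := IH (N - 2) (by omega) d' (by omega) hmono' heven' hEG'
  have hdu1 : d u = d 1 := huc u hu1 le_rfl
  have hub : d' u + 2 ≤ s := by
    rw [hd'u]
    omega
  have hbig : ∀ j, 1 ≤ j → j < s → j ≠ u → d' s + 1 ≤ d' j := by
    intro j h1 h2 h3
    rw [hd's, hd'o j h3 (by omega)]
    have h4 := hmono j s h1 (le_of_lt h2) hsn
    omega
  obtain ⟨H, hH⟩ := step_graph d' hu1 hus hsn hub hbig G hG
  refine ⟨H, ?_⟩
  intro v
  rw [hH v]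
  have hv := hpt (v.1 + 1)
  rcases eq_or_ne (v.1+1) u with h1 | h1
  · rw [if_pos (Or.inl h1), h1]
    rw [h1] at hv
    have hne : ¬ (u = s) := by omega
    rw [if_pos rfl, if_neg hne] at hv
    omega
  · rcases eq_or_ne (v.1+1) s with h2 | h2
    · rw [if_pos (Or.inr h2), h2]
      rw [h2] at hv
      have hne : ¬ (s = u) := by omega
      rw [if_neg hne, if_pos rfl] at hv
      omega
    · rw [if_neg (by tauto), hd'o _ h1 h2]
      omega


variable {n : ℕ} {d : ℕ → ℕ}

/-- Sub-lemma 1: the sum of corrected conjugates is at most the EG right side. -/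
lemma corrConj_sum_le (hk1 : 1 ≤ k) (hkn : k ≤ n) :
    ∑ i ∈ Icc 1 k, corrConj n d i ≤ k * (k - 1) + ∑ j ∈ Icc (k + 1) n, min (d j) k := by
  classical
  have hcc : ∀ i, corrConj n d i
      = ∑ j ∈ Icc 1 n, ((if j < i ∧ i - 1 ≤ d j then 1 else 0)
        + (if i < j ∧ i ≤ d j then 1 else 0)) := by
    intro i
    rw [corrConj, Finset.card_filter, Finset.card_filter, ← Finset.sum_add_distrib]
  calc ∑ i ∈ Icc 1 k, corrConj n d i
      = ∑ j ∈ Icc 1 n, ∑ i ∈ Icc 1 k, ((if j < i ∧ i - 1 ≤ d j then 1 else 0)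
          + (if i < j ∧ i ≤ d j then 1 else 0)) := by
        rw [← Finset.sum_comm]
        exact Finset.sum_congr rfl (fun i _ => hcc i)
    _ = (∑ j ∈ Icc 1 k, ∑ i ∈ Icc 1 k, ((if j < i ∧ i - 1 ≤ d j then 1 else 0)
          + (if i < j ∧ i ≤ d j then 1 else 0)))
        + ∑ j ∈ Icc (k+1) n, ∑ i ∈ Icc 1 k, ((if j < i ∧ i - 1 ≤ d j then 1 else 0)
          + (if i < j ∧ i ≤ d j then 1 else 0)) :=
        sum_split _ (Nat.zero_le k) hkn
    _ ≤ k * (k - 1) + ∑ j ∈ Icc (k+1) n, min (d j) k := by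
        apply Nat.add_le_add
        · calc ∑ j ∈ Icc 1 k, ∑ i ∈ Icc 1 k, ((if j < i ∧ i - 1 ≤ d j then 1 else 0)
                + (if i < j ∧ i ≤ d j then 1 else 0))
              ≤ ∑ _j ∈ Icc 1 k, (k - 1) := by
                apply Finset.sum_le_sum
                intro j hj
                rw [mem_Icc] at hj
                calc ∑ i ∈ Icc 1 k, ((if j < i ∧ i - 1 ≤ d j then 1 else 0)
                      + (if i < j ∧ i ≤ d j then 1 else 0))
                    ≤ ∑ i ∈ Icc 1 k, ((if j < i then 1 else 0) + (if i < j then 1 else 0)) := by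
                      apply Finset.sum_le_sum
                      intro i _
                      apply Nat.add_le_add <;> (split_ifs <;> omega)
                  _ = ((Icc 1 k).filter (fun i => j < i)).card
                      + ((Icc 1 k).filter (fun i => i < j)).card := by
                      rw [Finset.card_filter, Finset.card_filter, ← Finset.sum_add_distrib]
                  _ ≤ k - 1 := by
                      have e1 : (Icc 1 k).filter (fun i => j < i) = Icc (j+1) k := by
                        ext i; simp only [mem_filter, mem_Icc]; omega
                      have e2 : (Icc 1 k).filter (fun i => i < j) = Icc 1 (j-1) := by
                        ext i; simp only [mem_filter, mem_Icc]; omega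
                      rw [e1, e2, Nat.card_Icc, Nat.card_Icc]
                      omega
            _ = k * (k - 1) := by
                rw [Finset.sum_const, Nat.card_Icc, smul_eq_mul, Nat.add_sub_cancel]
        · apply Finset.sum_le_sum
          intro j hj
          rw [mem_Icc] at hj
          have e0 : ∀ i ∈ Icc 1 k, ((if j < i ∧ i - 1 ≤ d j then 1 else 0)
              + (if i < j ∧ i ≤ d j then 1 else 0)) = (if i ≤ d j then 1 else 0) := by
            intro i hi
            rw [mem_Icc] at hi
            rw [if_neg (by omega : ¬(j < i ∧ i - 1 ≤ d j))]
            by_cases h : i ≤ d j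
            · rw [if_pos ⟨by omega, h⟩, if_pos h]
            · rw [if_neg (fun hc => h hc.2), if_neg h]
          rw [Finset.sum_congr rfl e0, ← Finset.card_filter]
          have e1 : (Icc 1 k).filter (fun i => i ≤ d j) = Icc 1 (min (d j) k) := by
            ext i; simp only [mem_filter, mem_Icc]; omega
          rw [e1, Nat.card_Icc]
          omega


lemma conv_step (hk1 : 1 ≤ k) (hkn : k + 1 ≤ n) (hdk : k ≤ d k) (heq : d (k+1) = d k) :
    corrConj n d (k+1) ≤ corrConj n d k := by
  classical
  have h1 : ((Icc 1 n).filter (fun j => j < k+1 ∧ (k+1) - 1 ≤ d j)).card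
      ≤ ((Icc 1 n).filter (fun j => j < k ∧ k - 1 ≤ d j)).card + 1 := by
    have hsub : (Icc 1 n).filter (fun j => j < k+1 ∧ (k+1) - 1 ≤ d j)
        ⊆ insert k ((Icc 1 n).filter (fun j => j < k ∧ k - 1 ≤ d j)) := by
      intro j hj
      rw [mem_filter, mem_Icc] at hj
      rcases eq_or_ne j k with rfl | hjk
      · exact Finset.mem_insert_self _ _
      · apply Finset.mem_insert_of_mem
        rw [mem_filter, mem_Icc]
        omega
    calc _ ≤ (insert k ((Icc 1 n).filter (fun j => j < k ∧ k - 1 ≤ d j))).card :=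
          Finset.card_le_card hsub
      _ ≤ _ := Finset.card_insert_le _ _
  have h2 : ((Icc 1 n).filter (fun j => k+1 < j ∧ k+1 ≤ d j)).card + 1
      ≤ ((Icc 1 n).filter (fun j => k < j ∧ k ≤ d j)).card := by
    have hnm : (k+1) ∉ (Icc 1 n).filter (fun j => k+1 < j ∧ k+1 ≤ d j) := by
      rw [mem_filter]
      omega
    have hsub : insert (k+1) ((Icc 1 n).filter (fun j => k+1 < j ∧ k+1 ≤ d j))
        ⊆ (Icc 1 n).filter (fun j => k < j ∧ k ≤ d j) := by
      intro j hj
      rw [Finset.mem_insert] at hj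
      rw [mem_filter, mem_Icc]
      rcases hj with rfl | hj
      · omega
      · rw [mem_filter, mem_Icc] at hj
        omega
    calc _ = (insert (k+1) ((Icc 1 n).filter (fun j => k+1 < j ∧ k+1 ≤ d j))).card :=
          (Finset.card_insert_of_notMem hnm).symm
      _ ≤ _ := Finset.card_le_card hsub
  rw [corrConj, corrConj]
  omega

lemma fullEG (n : ℕ) (d : ℕ → ℕ) (hn : 1 ≤ n)
    (hmono : ∀ i j, 1 ≤ i → i ≤ j → j ≤ n → d j ≤ d i)
    (m : ℕ) (hm1 : 1 ≤ m) (hmn : m ≤ n) (hms : m ≤ d m)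
    (hmax : ∀ i, 1 ≤ i → i ≤ n → i ≤ d i → i ≤ m)
    (hBm : ∑ i ∈ Finset.Icc 1 m, d i ≤ ∑ i ∈ Finset.Icc 1 m, corrConj n d i)
    (hBrs : ∀ k, 1 ≤ k → k ≤ n → k ≤ d k → (k = n ∨ d (k + 1) < d k) →
      ∑ i ∈ Finset.Icc 1 k, d i ≤ ∑ i ∈ Finset.Icc 1 k, corrConj n d i) :
    ∀ k, 1 ≤ k → k ≤ n →
      ∑ i ∈ Icc 1 k, d i ≤ k * (k - 1) + ∑ j ∈ Icc (k + 1) n, min (d j) k := by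
  classical
  set Fz : ℕ → ℤ := fun k => ∑ i ∈ Icc 1 k, ((d i : ℤ) - (corrConj n d i : ℤ)) with hFzdef
  have hFz_eq : ∀ k, Fz k = ((∑ i ∈ Icc 1 k, d i : ℕ) : ℤ)
      - ((∑ i ∈ Icc 1 k, corrConj n d i : ℕ) : ℤ) := by
    intro k
    rw [hFzdef]
    push_cast
    rw [Finset.sum_sub_distrib]
  have hFsucc : ∀ k, Fz (k+1) = Fz k + ((d (k+1) : ℤ) - (corrConj n d (k+1) : ℤ)) := by
    intro k
    rw [hFzdef]
    exact Finset.sum_Icc_succ_top (by omega) _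
  have hstrong : ∀ k, 1 ≤ k → k ≤ m → k ≤ d k := by
    intro k h1 h2
    calc k ≤ m := h2
      _ ≤ d m := hms
      _ ≤ d k := hmono k m h1 h2 hmn
  have hP : ∀ t k, 1 ≤ k → k ≤ m → m - k ≤ t → (Fz k ≤ 0 ∨ Fz k ≤ Fz (k-1)) := by
    intro t
    induction t with
    | zero =>
      intro k hk1 hkm ht
      left
      have hkm' : k = m := by omega
      subst hkm'
      rw [hFz_eq]
      simp only [sub_nonpos]
      exact_mod_cast hBm
    | succ t IHt =>
      intro k hk1 hkm ht
      rcases eq_or_lt_of_le hkm with rfl | hklt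
      · left
        rw [hFz_eq]
        simp only [sub_nonpos]
        exact_mod_cast hBm
      · have hdk1 : d (k+1) ≤ d k := hmono k (k+1) hk1 (by omega) (by omega)
        rcases lt_or_eq_of_le hdk1 with hlt | heq
        · left
          rw [hFz_eq]
          simp only [sub_nonpos]
          exact_mod_cast hBrs k hk1 (by omega) (hstrong k hk1 hkm) (Or.inr hlt)
        · have hcc := conv_step (n := n) (d := d) hk1 (by omega) (hstrong k hk1 hkm) heq
          have hIH := IHt (k+1) (by omega) (by omega) (by omega)
          have hstep1 := hFsucc k
          have hstep0 : Fz k = Fz (k-1) + ((d k : ℤ) - (corrConj n d k : ℤ)) := by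
            have := hFsucc (k-1)
            rw [Nat.sub_add_cancel hk1] at this
            exact this
          have hccZ : ((corrConj n d (k+1) : ℕ) : ℤ) ≤ ((corrConj n d k : ℕ) : ℤ) := by
            exact_mod_cast hcc
          have heqZ : ((d (k+1) : ℕ) : ℤ) = ((d k : ℕ) : ℤ) := by exact_mod_cast heq
          rcases le_or_gt (Fz (k+1)) (Fz k) with hle | hlt2
          · right
            linarith
          · rcases hIH with h0 | hd
            · left
              linarith
            · rw [Nat.add_sub_cancel] at hd
              linarith
  have hQ : ∀ k, k ≤ m → Fz k ≤ 0 := by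
    intro k
    induction k using Nat.strong_induction_on with
    | _ k IHk =>
      intro hkm
      rcases Nat.eq_zero_or_pos k with rfl | hk1
      · rw [hFzdef]
        simp
      · rcases hP (m - k) k hk1 hkm le_rfl with h | h
        · exact h
        · exact le_trans h (IHk (k-1) (by omega) (by omega))
  have hBerge : ∀ k, 1 ≤ k → k ≤ m → ∑ i ∈ Icc 1 k, d i ≤ ∑ i ∈ Icc 1 k, corrConj n d i := by
    intro k _ hkm
    have := hQ k hkm
    rw [hFz_eq] at this
    simp only [sub_nonpos] at this
    exact_mod_cast this
  -- EG up to m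
  have hEGm : ∀ k, 1 ≤ k → k ≤ m →
      ∑ i ∈ Icc 1 k, d i ≤ k * (k - 1) + ∑ j ∈ Icc (k + 1) n, min (d j) k :=
    fun k h1 h2 => le_trans (hBerge k h1 h2) (corrConj_sum_le h1 (le_trans h2 hmn))
  -- extension beyond m
  have hsmall : ∀ k, m ≤ k → k < n → d (k+1) ≤ k := by
    intro k hmk hkn
    by_contra hc
    push_neg at hc
    have := hmax (k+1) (by omega) (by omega) (by omega)
    omega
  intro k hk1 hkn
  rcases le_or_gt k m with hkm | hmk
  · exact hEGm k hk1 hkm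
  · -- induction from m up to k
    have key : ∀ j, m ≤ j → j ≤ n →
        ∑ i ∈ Icc 1 j, d i ≤ j * (j - 1) + ∑ l ∈ Icc (j + 1) n, min (d l) j := by
      intro j hmj
      induction j, hmj using Nat.le_induction with
      | base => exact fun _ => hEGm m hm1 le_rfl
      | succ j hmj IHj =>
        intro hjn
        have hIH := IHj (by omega)
        have hdj1 : d (j+1) ≤ j := hsmall j hmj (by omega)
        have hdsmall : ∀ l, j + 1 ≤ l → l ≤ n → d l ≤ j := by
          intro l h1 h2
          exact le_trans (hmono (j+1) l (by omega) h1 h2) hdj1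
        have hW : ∑ l ∈ Icc (j+1) n, min (d l) j = ∑ l ∈ Icc (j+1) n, d l := by
          apply Finset.sum_congr rfl
          intro l hl
          rw [mem_Icc] at hl
          have := hdsmall l hl.1 hl.2
          omega
        have hW2 : ∑ l ∈ Icc (j+1+1) n, min (d l) (j+1) = ∑ l ∈ Icc (j+1+1) n, d l := by
          apply Finset.sum_congr rfl
          intro l hl
          rw [mem_Icc] at hl
          have := hdsmall l (by omega) hl.2
          omega
        have hsplitW : ∑ l ∈ Icc (j+1) n, d l = d (j+1) + ∑ l ∈ Icc (j+1+1) n, d l := by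
          rw [sum_split d (by omega : j ≤ j + 1) (by omega : j + 1 ≤ n)]
          congr 1
          rw [Finset.Icc_self, Finset.sum_singleton]
        have hL : ∑ i ∈ Icc 1 (j+1), d i = ∑ i ∈ Icc 1 j, d i + d (j+1) :=
          Finset.sum_Icc_succ_top (by omega) _
        rw [hW] at hIH
        rw [hW2, hL]
        have hQ1 : j * (j-1) + 2 * d (j+1) ≤ (j+1) * (j+1-1) := by
          have h1 : j + 1 - 1 = j := by omega
          rw [h1]
          have h2 : (j+1) * j = j * (j-1) + 2 * j := by
            rcases Nat.eq_zero_or_pos j with rfl | hj1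
            · simp
            · have h3 : j - 1 + 1 = j := by omega
              calc (j+1) * j = j * (j - 1 + 1) + j := by rw [h3]; ring
                _ = j * (j-1) + 2 * j := by ring
          omega
        omega
    exact key k (by omega) hkn


end EG17

/-- Zverovich–Zverovich reduction: if the Berge inequality holds for `k = m`
(the maximum strong index) and for every right strong index `k` (a strong index `k`,
i.e. `k ∈ [1..n]` with `d k ≥ k`, such that `k = n` or `d (k+1) < d k`), then `D`
is graphic. -/
theorem stmt_17 (n : ℕ) (d : ℕ → ℕ) (hn : 1 ≤ n)
    (hpos : ∀ i, 1 ≤ i → i ≤ n → 1 ≤ d i)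
    (hmono : ∀ i j, 1 ≤ i → i ≤ j → j ≤ n → d j ≤ d i)
    (heven : Even (∑ i ∈ Finset.Icc 1 n, d i))
    (m : ℕ) (hm1 : 1 ≤ m) (hmn : m ≤ n) (hms : m ≤ d m)
    (hmax : ∀ i, 1 ≤ i → i ≤ n → i ≤ d i → i ≤ m)
    (hBm : ∑ i ∈ Finset.Icc 1 m, d i ≤ ∑ i ∈ Finset.Icc 1 m, corrConj n d i)
    (hBrs : ∀ k, 1 ≤ k → k ≤ n → k ≤ d k → (k = n ∨ d (k + 1) < d k) →
      ∑ i ∈ Finset.Icc 1 k, d i ≤ ∑ i ∈ Finset.Icc 1 k, corrConj n d i) :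
    IsGraphic (List.ofFn fun i : Fin n => d (i.1 + 1)) := by
  have hEG : ∀ k, 1 ≤ k → k ≤ n →
      ∑ i ∈ Icc 1 k, d i ≤ k * (k - 1) + ∑ j ∈ Icc (k + 1) n, min (d j) k :=
    EG17.fullEG n d hn hmono m hm1 hmn hms hmax hBm hBrs
  obtain ⟨G, hG⟩ := EG17.egSuff (n := n) (∑ i ∈ Icc 1 n, d i) d rfl hmono heven hEG
  have key : ∀ (l : List ℕ), l.length = n →
      (∃ G : SimpleGraph (Fin n),
        List.Perm (List.ofFn fun v => Nat.card (G.neighborSet v)) l) → IsGraphic l := by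
    intro l h
    subst h
    exact id
  apply key _ List.length_ofFn
  refine ⟨G, ?_⟩
  have hfn : (fun v : Fin n => Nat.card (G.neighborSet v)) = fun i : Fin n => d (i.1 + 1) :=
    funext hG
  rw [hfn]
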